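/- Let u = ∑_{i,j} u_{ij} x_i x_j with (u_{ij}) invertible, and suppose Γ = k⟨x_1,…,x_n⟩/(u) carries a graded automorphism σ of degree 0 such that in the algebra A = k⟨x_1,…,x_n,z⟩/(∂_{x_i}(uz), ∂_z(uz)) one has z x_i = σ(x_i) z for all i, and z is not a zero-divisor in A. Then for each i, the element X_i = ∑_{j=1}^n (u_{ij} x_j + u_{ji} σ(x_j)) is zero in Γ. In particular σ = Id on V_Γ if and only if the matrix (u_{ij}) is skew-symmetric (i.e., u_{ij} = −u_{ji}), given that x_1,…,x_n are linearly independent in Γ_1. -/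

import Mathlib

open scoped TensorProduct BigOperators
noncomputable section

/-- The free associative algebra on `n` (degree-one) variables, realized as the
monoid algebra of the free monoid on `Fin n`. -/
abbrev FA (k : Type*) [CommRing k] (n : ℕ) := MonoidAlgebra k (FreeMonoid (Fin n))

namespace FA

variable {k : Type*} [CommRing k] {n : ℕ}

/-- The monomial (word) `x_{p 0} x_{p 1} ⋯` associated to a list of indices. -/
def word (p : List (Fin n)) : FA k n := MonoidAlgebra.single (FreeMonoid.ofList p) 1

/-- The generator `x_i`. -/
def X (i : Fin n) : FA k n := word [i]

/-- Cyclic sum of a monomial: `c(a_1⋯a_r) = ∑_i a_i⋯a_r a_1⋯a_{i-1}`. -/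
def cycWord (p : List (Fin n)) : FA k n :=
  ∑ i ∈ Finset.range p.length, word (p.rotate i)

/-- Cyclic sum operator `c : T(V) → T(V)`, extended linearly from monomials. -/
def cyc (f : FA k n) : FA k n :=
  f.coeff.sum fun p a => a • cycWord (FreeMonoid.toList p)

/-- Cyclic derivative of a monomial: `∂_x(p) = ∑_{p = u x v} v u`. -/
def cycDerWord (x : Fin n) (p : List (Fin n)) : FA k n :=
  ∑ i ∈ Finset.range p.length,
    if p[i]? = some x then word (p.drop (i + 1) ++ p.take i) else 0

/-- Cyclic derivative `∂_x : T(V) → T(V)`, extended linearly from monomials. -/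
def cycDer (x : Fin n) (f : FA k n) : FA k n :=
  f.coeff.sum fun p a => a • cycDerWord x (FreeMonoid.toList p)

/-- Ordinary partial derivative of a monomial: `∂p/∂x = ∑_{p = u x v} u ⊗ v`. -/
def pderWord (x : Fin n) (p : List (Fin n)) : FA k n ⊗[k] FA k n :=
  ∑ i ∈ Finset.range p.length,
    if p[i]? = some x then (word (p.take i)) ⊗ₜ[k] (word (p.drop (i + 1))) else 0

/-- Ordinary partial derivative `∂/∂x : T(V) → T(V) ⊗ T(V)`, extended linearly. -/
def pder (x : Fin n) (f : FA k n) : FA k n ⊗[k] FA k n :=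
  f.coeff.sum fun p a => a • pderWord x (FreeMonoid.toList p)

/-- `f` is homogeneous of degree `r`: every monomial in its support is a word of length `r`. -/
def IsHomog (r : ℕ) (f : FA k n) : Prop :=
  ∀ p ∈ f.coeff.support, (FreeMonoid.toList p).length = r

lemma word_mul (p q : List (Fin n)) : (word p : FA k n) * word q = word (p ++ q) := by
  simp [word, MonoidAlgebra.single_mul_single]

lemma cycDer_add (x : Fin n) (f g : FA k n) :
    cycDer x (f + g) = cycDer x f + cycDer x g := by
  classical
  exact Finsupp.sum_add_index (f := f.coeff) (g := g.coeff) (by simp) (by intros; rw [add_smul])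

lemma cycDer_zero (x : Fin n) : cycDer x (0 : FA k n) = 0 := by
  simp [cycDer]

lemma cycDer_smul (x : Fin n) (a : k) (f : FA k n) :
    cycDer x (a • f) = a • cycDer x f := by
  classical
  unfold cycDer
  rw [MonoidAlgebra.coeff_smul, Finsupp.sum_smul_index (by simp), Finsupp.smul_sum]
  simp [mul_smul]

lemma cycDer_sum {α : Type*} (x : Fin n) (s : Finset α) (f : α → FA k n) :
    cycDer x (∑ a ∈ s, f a) = ∑ a ∈ s, cycDer x (f a) := by
  classical
  induction s using Finset.induction with
  | empty => simp [cycDer_zero]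
  | insert _ _ h ih => simp [Finset.sum_insert h, cycDer_add, ih]

lemma cycDer_word (x : Fin n) (p : List (Fin n)) :
    cycDer x (word p : FA k n) = cycDerWord x p := by
  classical
  rw [cycDer, word, MonoidAlgebra.coeff_single]
  rw [Finsupp.sum_single_index]
  · simp
  · simp

lemma cycDerWord_triple (x a b c : Fin n) :
    (cycDerWord x [a, b, c] : FA k n) = (if a = x then word [b, c] else 0) +
      (if b = x then word [c, a] else 0) + (if c = x then word [a, b] else 0) := by
  simp [cycDerWord, Finset.sum_range_succ]

end FA

/-- Let `Γ = k⟨x₁,…,xₙ⟩/(u)` be the quadric defined by a non-degenerate quadratic element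
`u = ∑ u_{ij} xᵢxⱼ`, and `A = k⟨x₁,…,xₙ,z⟩/(∂_{xᵢ}(uz), ∂_z(uz))` the associated potential
algebra. Suppose `Γ` carries a (degree-0 graded) automorphism `σ` such that, under the
natural embedding `ι : Γ → A` (`ι(xᵢ) = xᵢ`), one has `z·xᵢ = ι(σ(xᵢ))·z` in `A` for all
`i`, and suppose `z` is not a (right) zero-divisor in `A`. Then
`Xᵢ = ∑ⱼ (u_{ij} xⱼ + u_{ji} σ(xⱼ)) = 0` in `Γ` for every `i`; in particular, given that
`x₁,…,xₙ` are linearly independent in `Γ₁`, `σ` is the identity on the generators if and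
only if the matrix `(u_{ij})` is skew-symmetric. -/
theorem sigma_skew_criterion {k : Type*} [Field k] [CharZero k] (n : ℕ) (hn : 2 ≤ n)
    (U : Matrix (Fin n) (Fin n) k) (hU : IsUnit U.det) :
    -- the quadratic element u in n variables and the potential w = u·z in n+1 variables
    let uΓ : FA k n := ∑ i, ∑ j, U i j • (FA.X i * FA.X j)
    let xA' : Fin n → FA k (n + 1) := fun i => FA.X i.castSucc
    let zA' : FA k (n + 1) := FA.X (Fin.last n)
    let w : FA k (n + 1) := (∑ i, ∑ j, U i j • (xA' i * xA' j)) * zA'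
    -- Γ : the quadric, A : the potential algebra, as quotients by two-sided ideals
    let Γ := RingQuot (fun a b : FA k n => a = uΓ ∧ b = 0)
    let A := RingQuot (fun a b : FA k (n + 1) =>
      (∃ i : Fin (n + 1), a = FA.cycDer i w) ∧ b = 0)
    let xΓ : Fin n → Γ := fun i =>
      RingQuot.mkAlgHom k (fun a b : FA k n => a = uΓ ∧ b = 0) (FA.X i)
    let xA : Fin n → A := fun i =>
      RingQuot.mkAlgHom k (fun a b : FA k (n + 1) =>
        (∃ i : Fin (n + 1), a = FA.cycDer i w) ∧ b = 0) (xA' i)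
    let zA : A := RingQuot.mkAlgHom k (fun a b : FA k (n + 1) =>
        (∃ i : Fin (n + 1), a = FA.cycDer i w) ∧ b = 0) zA'
    ∀ (ι : Γ →ₐ[k] A), Function.Injective ι → (∀ i, ι (xΓ i) = xA i) →
    ∀ (σ : Γ ≃ₐ[k] Γ), (∀ i, zA * xA i = ι (σ (xΓ i)) * zA) →
    (∀ a : A, a * zA = 0 → a = 0) →
    LinearIndependent k xΓ →
    (∀ i, ∑ j, (U i j • xΓ j + U j i • σ (xΓ j)) = 0) ∧
    ((∀ i, σ (xΓ i) = xΓ i) ↔ ∀ i j, U i j = - U j i) := by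
  classical
  intro uΓ xA' zA' w Γ A xΓ xA zA ι hinj hιx σ hσ hz hLI
  set relA := (fun a b : FA k (n + 1) =>
      (∃ i : Fin (n + 1), a = FA.cycDer i w) ∧ b = 0) with hrelA
  set π := RingQuot.mkAlgHom k relA with hπ
  have hxA : ∀ i, xA i = π (FA.X i.castSucc) := fun _ => rfl
  have hzA : zA = π (FA.X (Fin.last n)) := rfl
  -- w as a sum of cubic words
  have hw : w = ∑ p, ∑ q, U p q • FA.word [p.castSucc, q.castSucc, Fin.last n] := by
    show (∑ i, ∑ j, U i j • (FA.X i.castSucc * FA.X j.castSucc)) * FA.X (Fin.last n) = _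
    rw [Finset.sum_mul]
    refine Finset.sum_congr rfl fun p _ => ?_
    rw [Finset.sum_mul]
    refine Finset.sum_congr rfl fun q _ => ?_
    rw [smul_mul_assoc, FA.X, FA.X, FA.X, FA.word_mul, FA.word_mul]
    rfl
  have hlast : ∀ p : Fin n, ¬ (Fin.last n = Fin.castSucc p) :=
    fun p => (Fin.castSucc_lt_last p).ne'
  -- compute the cyclic derivative
  have hder : ∀ i0 : Fin n, FA.cycDer (Fin.castSucc i0) w =
      ∑ q, U i0 q • FA.word [q.castSucc, Fin.last n]
        + ∑ q, U q i0 • FA.word [Fin.last n, q.castSucc] := by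
    intro i0
    rw [hw, FA.cycDer_sum]
    simp only [FA.cycDer_sum, FA.cycDer_smul, FA.cycDer_word, FA.cycDerWord_triple,
      Fin.castSucc_inj, hlast, if_false, add_zero, smul_add, smul_ite, smul_zero,
      Finset.sum_add_distrib]
    congr 1
    · rw [Finset.sum_comm]
      simp
    · simp
  -- the relation in A
  have hA : ∀ i0 : Fin n,
      ∑ q, (U i0 q • (xA q * zA) + U q i0 • (zA * xA q)) = 0 := by
    intro i0
    have h0 : π (FA.cycDer (Fin.castSucc i0) w) = 0 := by
      rw [show (0 : A) = π 0 by rw [map_zero]]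
      exact RingQuot.mkAlgHom_rel k ⟨⟨Fin.castSucc i0, rfl⟩, rfl⟩
    rw [hder i0] at h0
    rw [← h0]
    rw [map_add, map_sum, map_sum, ← Finset.sum_add_distrib]
    refine Finset.sum_congr rfl fun q _ => ?_
    rw [map_smul, map_smul, hxA, hzA,
      show (FA.word [q.castSucc, Fin.last n] : FA k (n+1))
        = FA.X q.castSucc * FA.X (Fin.last n) by rw [FA.X, FA.X, FA.word_mul]; rfl,
      show (FA.word [Fin.last n, q.castSucc] : FA k (n+1))
        = FA.X (Fin.last n) * FA.X q.castSucc by rw [FA.X, FA.X, FA.word_mul]; rfl,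
      map_mul, map_mul]
  -- push to Γ
  have key : ∀ i, ∑ j, (U i j • xΓ j + U j i • σ (xΓ j)) = 0 := by
    intro i
    have h1 : (∑ q, (U i q • ι (xΓ q) + U q i • ι (σ (xΓ q)))) * zA = 0 := by
      rw [Finset.sum_mul]
      rw [← hA i]
      refine Finset.sum_congr rfl fun q _ => ?_
      rw [add_mul, smul_mul_assoc, smul_mul_assoc, hιx, hσ]
    have h2 : ι (∑ j, (U i j • xΓ j + U j i • σ (xΓ j))) = 0 := by
      rw [map_sum, ← hz _ h1]
      exact Finset.sum_congr rfl fun q _ => by rw [map_add, map_smul, map_smul]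
    exact hinj (by rw [h2, map_zero])
  refine ⟨key, ?_, ?_⟩
  · -- σ = id → skew
    intro hid i j
    have h := key i
    simp only [hid] at h
    have h' : ∑ j, (U i j + U j i) • xΓ j = 0 := by
      rw [← h]; exact Finset.sum_congr rfl fun q _ => add_smul _ _ _
    have := Fintype.linearIndependent_iff.mp hLI (fun j => U i j + U j i) h' j
    exact eq_neg_of_add_eq_zero_left this
  · -- skew → σ = id
    intro hskew l
    set v : Fin n → Γ := fun j => xΓ j - σ (xΓ j) with hv
    have hvz : ∀ i, ∑ j, U i j • v j = 0 := by
      intro i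
      rw [← key i]
      refine Finset.sum_congr rfl fun j _ => ?_
      show U i j • (xΓ j - σ (xΓ j)) = _
      rw [hskew j i, smul_sub, sub_eq_add_neg, ← neg_smul]
    have hUinv : U⁻¹ * U = 1 := Matrix.nonsing_inv_mul U hU
    have hvl : v l = 0 := by
      have : v l = ∑ j, ((U⁻¹ * U) l j) • v j := by
        rw [hUinv]
        simp [Matrix.one_apply, ite_smul]
      rw [this]
      simp only [Matrix.mul_apply, Finset.sum_smul, mul_smul]
      rw [Finset.sum_comm]
      simp only [← Finset.smul_sum, hvz, smul_zero, Finset.sum_const_zero]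
    have := sub_eq_zero.mp hvl
    exact this.symm
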